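/- Let 0 < b_c < a_c and k₁, k₁* ∈ (−b_c², 0). Let P = (x₁, y₁, z₁) and Q = (x₂, y₂, z₂) both satisfy x_i²/(a_c² + k₁) + y_i²/(b_c² + k₁) + z_i²/k₁ = 1, and let P*, Q* be their images under the scaling γ(k₁, k₁*) : (x, y, z) ↦ (x√((a_c² + k₁*)/(a_c² + k₁)), y√((b_c² + k₁*)/(b_c² + k₁)), z√(k₁*/k₁)). Then the cross distances agree: ‖P − Q*‖ = ‖P* − Q‖ (Ivory's theorem for this pair of confocal one-sheeted hyperboloids). -/

import Mathlib

set_option maxHeartbeats 1000000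


/-- Ivory's theorem for a pair of confocal one-sheeted hyperboloids: if `P, Q`
lie on the hyperboloid with parameter `k₁` and `P*, Q*` are their images under
the axial scaling `γ(k₁, k₁*)`, then `‖P − Q*‖ = ‖P* − Q‖`. -/
theorem stmt8 (ac bc k1 k1s : ℝ) (hbc : 0 < bc) (hba : bc < ac)
    (hk1 : k1 ∈ Set.Ioo (-bc ^ 2) 0) (hk1s : k1s ∈ Set.Ioo (-bc ^ 2) 0)
    (x1 y1 z1 x2 y2 z2 : ℝ)
    (hP : x1 ^ 2 / (ac ^ 2 + k1) + y1 ^ 2 / (bc ^ 2 + k1) + z1 ^ 2 / k1 = 1)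
    (hQ : x2 ^ 2 / (ac ^ 2 + k1) + y2 ^ 2 / (bc ^ 2 + k1) + z2 ^ 2 / k1 = 1)
    (P Q Ps Qs : EuclideanSpace ℝ (Fin 3))
    (hPdef : P = ![x1, y1, z1]) (hQdef : Q = ![x2, y2, z2])
    (hPs : Ps = ![x1 * Real.sqrt ((ac ^ 2 + k1s) / (ac ^ 2 + k1)),
                  y1 * Real.sqrt ((bc ^ 2 + k1s) / (bc ^ 2 + k1)),
                  z1 * Real.sqrt (k1s / k1)])
    (hQs : Qs = ![x2 * Real.sqrt ((ac ^ 2 + k1s) / (ac ^ 2 + k1)),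
                  y2 * Real.sqrt ((bc ^ 2 + k1s) / (bc ^ 2 + k1)),
                  z2 * Real.sqrt (k1s / k1)]) :
    ‖P - Qs‖ = ‖Ps - Q‖ := by
  obtain ⟨h1, h2⟩ := hk1
  obtain ⟨h3, h4⟩ := hk1s
  have hb2a2 : bc ^ 2 < ac ^ 2 := by nlinarith
  have hA : 0 < ac ^ 2 + k1 := by nlinarith
  have hB : 0 < bc ^ 2 + k1 := by nlinarith
  have hAs : 0 < ac ^ 2 + k1s := by nlinarith
  have hBs : 0 < bc ^ 2 + k1s := by nlinarith
  set sa := Real.sqrt ((ac ^ 2 + k1s) / (ac ^ 2 + k1)) with hsadef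
  set sb := Real.sqrt ((bc ^ 2 + k1s) / (bc ^ 2 + k1)) with hsbdef
  set sc := Real.sqrt (k1s / k1) with hscdef
  have hsa : sa ^ 2 = (ac ^ 2 + k1s) / (ac ^ 2 + k1) :=
    Real.sq_sqrt (by positivity)
  have hsb : sb ^ 2 = (bc ^ 2 + k1s) / (bc ^ 2 + k1) :=
    Real.sq_sqrt (by positivity)
  have hzz : 0 ≤ k1s / k1 := le_of_lt (div_pos_of_neg_of_neg h4 h2)
  have hsc : sc ^ 2 = k1s / k1 := Real.sq_sqrt hzz
  have key : (x1 ^ 2 - x2 ^ 2) * (1 - sa ^ 2) + (y1 ^ 2 - y2 ^ 2) * (1 - sb ^ 2)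
      + (z1 ^ 2 - z2 ^ 2) * (1 - sc ^ 2) = 0 := by
    have hk2 : k1 ≠ 0 := ne_of_lt h2
    have e1 : 1 - sa ^ 2 = (k1 - k1s) / (ac ^ 2 + k1) := by
      rw [hsa]; field_simp; ring
    have e2 : 1 - sb ^ 2 = (k1 - k1s) / (bc ^ 2 + k1) := by
      rw [hsb]; field_simp; ring
    have e3 : 1 - sc ^ 2 = (k1 - k1s) / k1 := by
      rw [hsc]; field_simp
    rw [e1, e2, e3]
    linear_combination (k1 - k1s) * hP - (k1 - k1s) * hQ
  rw [EuclideanSpace.norm_eq, EuclideanSpace.norm_eq]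
  congr 1
  simp [hPdef, hQdef, hPs, hQs, Fin.sum_univ_three, Real.norm_eq_abs, sq_abs]
  ring_nf
  ring_nf at key
  linarith [key]
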